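/- In M₍₂₎ = Λ(x1,x2,y1,y2,y3), the element Z = x1^16·y2y3 + 5·x1^15·x2·y1y3 − 5·x1^14·x2^2·y1y2 does not belong to the ideal generated by γ and x2^12. -/

import Mathlib

/-- A graded-commutative, associative, unital `ℚ`-algebra with an `ℕ`-grading. -/
structure GradedCommAlg where
  carrier : Type
  [ring : Ring carrier]
  [algebra : Algebra ℚ carrier]
  grading : ℕ → Submodule ℚ carrier
  internal : DirectSum.IsInternal grading
  one_mem : (1 : carrier) ∈ grading 0
  mul_mem : ∀ {i j : ℕ} {x y : carrier}, x ∈ grading i → y ∈ grading j → x * y ∈ grading (i + j)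
  gcomm : ∀ {i j : ℕ} {x y : carrier}, x ∈ grading i → y ∈ grading j →
      x * y = ((-1 : ℚ) ^ (i * j)) • (y * x)

attribute [instance] GradedCommAlg.ring GradedCommAlg.algebra

/-- A connected differential graded algebra (dga) over `ℚ`. -/
structure ConnectedDGA extends GradedCommAlg where
  connected : ∀ x ∈ grading 0, ∃ q : ℚ, x = q • (1 : carrier)
  d : carrier →ₗ[ℚ] carrier
  d_deg : ∀ {k : ℕ} {x : carrier}, x ∈ grading k → d x ∈ grading (k + 1)
  d_sq : ∀ x, d (d x) = 0
  leibniz : ∀ {i : ℕ} {x y : carrier}, x ∈ grading i →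
      d (x * y) = d x * y + ((-1 : ℚ) ^ i) • (x * d y)

namespace ConnectedDGA

/-- `x` is a coboundary, i.e. represents `0` in cohomology. -/
def IsCoboundary (A : ConnectedDGA) (x : A.carrier) : Prop := ∃ y, A.d y = x

/-- The (two-sided, by graded-commutativity) ideal generated by a set `S`. -/
def mulIdeal (A : ConnectedDGA) (S : Set A.carrier) : Submodule ℚ A.carrier :=
  Submodule.span ℚ {x : A.carrier | ∃ r : A.carrier, ∃ s ∈ S, x = r * s}

end ConnectedDGA

/-- A weight on a connected dga: a bigraded decomposition compatible with `d` and products. -/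
structure Weight (A : ConnectedDGA) where
  w : ℕ → ℤ → Submodule ℚ A.carrier
  internal : DirectSum.IsInternal (fun p : ℕ × ℤ => w p.1 p.2)
  grading_eq : ∀ k, A.grading k = ⨆ n, w k n
  d_mem : ∀ {k : ℕ} {n : ℤ} {x : A.carrier}, x ∈ w k n → A.d x ∈ w (k + 1) n
  mul_mem : ∀ {k l : ℕ} {n m : ℤ} {x y : A.carrier},
      x ∈ w k n → y ∈ w l m → x * y ∈ w (k + l) (n + m)

namespace Weight

/-- The weight-`n` part of `A`. An element of `piece n` (nonzero) is `ω`-homogeneous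
of weight `n`. -/
def piece {A : ConnectedDGA} (W : Weight A) (n : ℤ) : Submodule ℚ A.carrier := ⨆ k, W.w k n

/-- A weight is positive if the negative pieces vanish and the weight `0` piece is `A^0`. -/
def Positive {A : ConnectedDGA} (W : Weight A) : Prop :=
  (∀ n : ℤ, n < 0 → W.piece n = ⊥) ∧ W.piece 0 = A.grading 0

end Weight

/-- A dga morphism: degree-preserving algebra homomorphism commuting with differentials. -/
structure Hom (A B : ConnectedDGA) where
  toFun : A.carrier →ₐ[ℚ] B.carrier
  map_grading : ∀ {k : ℕ} {x : A.carrier}, x ∈ A.grading k → toFun x ∈ B.grading k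
  map_d : ∀ x, B.d (toFun x) = toFun (A.d x)

/-- `ν` is a representative of the fundamental class of a dga whose cohomology is a
Poincaré duality algebra of formal dimension `N`. -/
structure PoincareDuality (A : ConnectedDGA) (N : ℕ) (ν : A.carrier) : Prop where
  mem : ν ∈ A.grading N
  cocycle : A.d ν = 0
  not_bdry : ¬ A.IsCoboundary ν
  top_vanish : ∀ k : ℕ, N < k → ∀ x ∈ A.grading k, A.d x = 0 → A.IsCoboundary x
  top_span : ∀ x ∈ A.grading N, A.d x = 0 → ∃ q : ℚ, A.IsCoboundary (x - q • ν)
  nondeg : ∀ k : ℕ, k ≤ N → ∀ x ∈ A.grading k, A.d x = 0 → ¬ A.IsCoboundary x →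
      ∃ y ∈ A.grading (N - k), A.d y = 0 ∧ ¬ A.IsCoboundary (x * y)

/-- `M` is the free graded-commutative dga `Λ(x1,x2,y1,y2,y3)` with `|x1| = 8`, `|x2| = 10`,
`|y1| = 33`, `|y2| = 35`, `|y3| = 37`, `dx1 = dx2 = 0`, `dy1 = x1³x2`, `dy2 = x1²x2²`,
`dy3 = x1x2³`, freeness being expressed by the universal property of the free
graded-commutative algebra on these five generators. -/
def FreeAL (M : ConnectedDGA) (x1 x2 y1 y2 y3 : M.carrier) : Prop :=
  x1 ∈ M.grading 8 ∧ x2 ∈ M.grading 10 ∧ y1 ∈ M.grading 33 ∧ y2 ∈ M.grading 35 ∧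
  y3 ∈ M.grading 37 ∧
  M.d x1 = 0 ∧ M.d x2 = 0 ∧ M.d y1 = x1 ^ 3 * x2 ∧ M.d y2 = x1 ^ 2 * x2 ^ 2 ∧
  M.d y3 = x1 * x2 ^ 3 ∧
  ∀ (B : GradedCommAlg) (a1 a2 b1 b2 b3 : B.carrier),
    a1 ∈ B.grading 8 → a2 ∈ B.grading 10 → b1 ∈ B.grading 33 → b2 ∈ B.grading 35 →
    b3 ∈ B.grading 37 →
    ∃! g : M.carrier →ₐ[ℚ] B.carrier,
      (∀ (k : ℕ) (x : M.carrier), x ∈ M.grading k → g x ∈ B.grading k) ∧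
      g x1 = a1 ∧ g x2 = a2 ∧ g y1 = b1 ∧ g y2 = b2 ∧ g y3 = b3



noncomputable section
namespace NotInIdealAux

abbrev P := MvPolynomial (Fin 2) ℚ

def wt : Fin 2 → ℕ := ![8, 10]

abbrev W (n : ℕ) : Submodule ℚ P := MvPolynomial.weightedHomogeneousSubmodule ℚ wt n

/-- Shifted weighted-homogeneous piece. -/
def Wc (s k : ℕ) : Submodule ℚ P := if s ≤ k then W (k - s) else ⊥

lemma Wc_mul {s t i j : ℕ} {p q : P} (hp : p ∈ Wc s i) (hq : q ∈ Wc t j) :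
    p * q ∈ Wc (s + t) (i + j) := by
  unfold Wc at *
  split_ifs at hp hq with h1 h2
  · have : s + t ≤ i + j := by omega
    rw [if_pos this]
    have := (MvPolynomial.mem_weightedHomogeneousSubmodule _ _ _ _).1 hp |>.mul
      ((MvPolynomial.mem_weightedHomogeneousSubmodule _ _ _ _).1 hq)
    rw [MvPolynomial.mem_weightedHomogeneousSubmodule]
    have he : i - s + (j - t) = i + j - (s + t) := by omega
    rwa [he] at this
  · simp only [Submodule.mem_bot] at hq; simp [hq]
  · simp only [Submodule.mem_bot] at hp; simp [hp]
  · simp only [Submodule.mem_bot] at hp; simp [hp]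

lemma weight_even (d : Fin 2 →₀ ℕ) : Even (Finsupp.weight wt d) := by
  classical
  rw [Finsupp.weight_apply, Finsupp.sum]
  apply Finset.even_sum
  intro i _
  rw [Nat.even_iff]
  fin_cases i <;> simp [wt, smul_eq_mul, Nat.mul_mod]

lemma W_odd_eq_zero {n : ℕ} (hn : ¬ Even n) {p : P} (hp : p ∈ W n) : p = 0 := by
  by_contra h
  obtain ⟨d, hd⟩ := MvPolynomial.support_nonempty.2 h
  have := ((MvPolynomial.mem_weightedHomogeneousSubmodule _ _ _ _).1 hp)
    (MvPolynomial.mem_support_iff.1 hd)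
  exact hn (this ▸ weight_even d)

lemma Wc_parity_eq_zero {s k : ℕ} (h : (s % 2) ≠ (k % 2)) {p : P} (hp : p ∈ Wc s k) : p = 0 := by
  unfold Wc at hp
  split_ifs at hp with h1
  · exact W_odd_eq_zero (by simp [Nat.even_iff]; omega) hp
  · simpa using hp


/-- The carrier: `ℚ[u,v] ⊗ (Λ(e1,e2,e3) truncated above exterior degree 2)`. -/
@[ext] structure B where
  c0 : P
  c1 : P
  c2 : P
  c3 : P
  c12 : P
  c13 : P
  c23 : P

namespace B

instance : Zero B := ⟨⟨0,0,0,0,0,0,0⟩⟩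
instance : One B := ⟨⟨1,0,0,0,0,0,0⟩⟩
instance : Add B := ⟨fun x y => ⟨x.c0+y.c0, x.c1+y.c1, x.c2+y.c2, x.c3+y.c3,
  x.c12+y.c12, x.c13+y.c13, x.c23+y.c23⟩⟩
instance : Neg B := ⟨fun x => ⟨-x.c0, -x.c1, -x.c2, -x.c3, -x.c12, -x.c13, -x.c23⟩⟩
instance : SMul ℚ B := ⟨fun q x => ⟨q•x.c0, q•x.c1, q•x.c2, q•x.c3, q•x.c12, q•x.c13, q•x.c23⟩⟩
instance : Mul B := ⟨fun x y =>
  ⟨x.c0*y.c0,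
   x.c0*y.c1 + x.c1*y.c0,
   x.c0*y.c2 + x.c2*y.c0,
   x.c0*y.c3 + x.c3*y.c0,
   x.c0*y.c12 + x.c12*y.c0 + (x.c1*y.c2 - x.c2*y.c1),
   x.c0*y.c13 + x.c13*y.c0 + (x.c1*y.c3 - x.c3*y.c1),
   x.c0*y.c23 + x.c23*y.c0 + (x.c2*y.c3 - x.c3*y.c2)⟩⟩

@[simp] lemma zero_c0 : (0:B).c0 = 0 := rfl
@[simp] lemma zero_c1 : (0:B).c1 = 0 := rfl
@[simp] lemma zero_c2 : (0:B).c2 = 0 := rfl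
@[simp] lemma zero_c3 : (0:B).c3 = 0 := rfl
@[simp] lemma zero_c12 : (0:B).c12 = 0 := rfl
@[simp] lemma zero_c13 : (0:B).c13 = 0 := rfl
@[simp] lemma zero_c23 : (0:B).c23 = 0 := rfl
@[simp] lemma one_c0 : (1:B).c0 = 1 := rfl
@[simp] lemma one_c1 : (1:B).c1 = 0 := rfl
@[simp] lemma one_c2 : (1:B).c2 = 0 := rfl
@[simp] lemma one_c3 : (1:B).c3 = 0 := rfl
@[simp] lemma one_c12 : (1:B).c12 = 0 := rfl
@[simp] lemma one_c13 : (1:B).c13 = 0 := rfl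
@[simp] lemma one_c23 : (1:B).c23 = 0 := rfl
@[simp] lemma add_c0 (x y : B) : (x+y).c0 = x.c0+y.c0 := rfl
@[simp] lemma add_c1 (x y : B) : (x+y).c1 = x.c1+y.c1 := rfl
@[simp] lemma add_c2 (x y : B) : (x+y).c2 = x.c2+y.c2 := rfl
@[simp] lemma add_c3 (x y : B) : (x+y).c3 = x.c3+y.c3 := rfl
@[simp] lemma add_c12 (x y : B) : (x+y).c12 = x.c12+y.c12 := rfl
@[simp] lemma add_c13 (x y : B) : (x+y).c13 = x.c13+y.c13 := rfl
@[simp] lemma add_c23 (x y : B) : (x+y).c23 = x.c23+y.c23 := rfl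
@[simp] lemma neg_c0 (x : B) : (-x).c0 = -x.c0 := rfl
@[simp] lemma neg_c1 (x : B) : (-x).c1 = -x.c1 := rfl
@[simp] lemma neg_c2 (x : B) : (-x).c2 = -x.c2 := rfl
@[simp] lemma neg_c3 (x : B) : (-x).c3 = -x.c3 := rfl
@[simp] lemma neg_c12 (x : B) : (-x).c12 = -x.c12 := rfl
@[simp] lemma neg_c13 (x : B) : (-x).c13 = -x.c13 := rfl
@[simp] lemma neg_c23 (x : B) : (-x).c23 = -x.c23 := rfl
@[simp] lemma smul_c0 (q : ℚ) (x : B) : (q•x).c0 = q•x.c0 := rfl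
@[simp] lemma smul_c1 (q : ℚ) (x : B) : (q•x).c1 = q•x.c1 := rfl
@[simp] lemma smul_c2 (q : ℚ) (x : B) : (q•x).c2 = q•x.c2 := rfl
@[simp] lemma smul_c3 (q : ℚ) (x : B) : (q•x).c3 = q•x.c3 := rfl
@[simp] lemma smul_c12 (q : ℚ) (x : B) : (q•x).c12 = q•x.c12 := rfl
@[simp] lemma smul_c13 (q : ℚ) (x : B) : (q•x).c13 = q•x.c13 := rfl
@[simp] lemma smul_c23 (q : ℚ) (x : B) : (q•x).c23 = q•x.c23 := rfl
@[simp] lemma mul_c0 (x y : B) : (x*y).c0 = x.c0*y.c0 := rfl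
@[simp] lemma mul_c1 (x y : B) : (x*y).c1 = x.c0*y.c1 + x.c1*y.c0 := rfl
@[simp] lemma mul_c2 (x y : B) : (x*y).c2 = x.c0*y.c2 + x.c2*y.c0 := rfl
@[simp] lemma mul_c3 (x y : B) : (x*y).c3 = x.c0*y.c3 + x.c3*y.c0 := rfl
@[simp] lemma mul_c12 (x y : B) : (x*y).c12 = x.c0*y.c12 + x.c12*y.c0 + (x.c1*y.c2 - x.c2*y.c1) := rfl
@[simp] lemma mul_c13 (x y : B) : (x*y).c13 = x.c0*y.c13 + x.c13*y.c0 + (x.c1*y.c3 - x.c3*y.c1) := rfl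
@[simp] lemma mul_c23 (x y : B) : (x*y).c23 = x.c0*y.c23 + x.c23*y.c0 + (x.c2*y.c3 - x.c3*y.c2) := rfl

instance : AddCommGroup B where
  add_assoc x y z := by ext : 1 <;> simp <;> ring
  zero_add x := by ext : 1 <;> simp
  add_zero x := by ext : 1 <;> simp
  add_comm x y := by ext : 1 <;> simp <;> ring
  neg_add_cancel x := by ext : 1 <;> simp
  nsmul := nsmulRec
  zsmul := zsmulRec

private lemma mul_assoc' (x y z : B) : x * y * z = x * (y * z) := by
  ext : 1 <;> simp <;> ring

private lemma one_mul' (x : B) : 1 * x = x := by ext : 1 <;> simp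
private lemma mul_one' (x : B) : x * 1 = x := by ext : 1 <;> simp
private lemma left_distrib' (x y z : B) : x * (y + z) = x * y + x * z := by
  ext : 1 <;> simp <;> ring
private lemma right_distrib' (x y z : B) : (x + y) * z = x * z + y * z := by
  ext : 1 <;> simp <;> ring
private lemma zero_mul' (x : B) : 0 * x = 0 := by ext : 1 <;> simp
private lemma mul_zero' (x : B) : x * 0 = 0 := by ext : 1 <;> simp

instance : Ring B :=
  { (inferInstance : AddCommGroup B), (inferInstance : Mul B), (inferInstance : One B) with
    mul_assoc := mul_assoc'
    one_mul := one_mul'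
    mul_one := mul_one'
    left_distrib := left_distrib'
    right_distrib := right_distrib'
    zero_mul := zero_mul'
    mul_zero := mul_zero' }

instance : Module ℚ B where
  one_smul x := by ext : 1 <;> simp
  mul_smul q r x := by ext : 1 <;> simp [mul_smul]
  smul_zero q := by ext : 1 <;> simp
  smul_add q x y := by ext : 1 <;> simp
  add_smul q r x := by ext : 1 <;> simp [add_smul]
  zero_smul x := by ext : 1 <;> simp

@[simp] lemma sub_c0 (x y : B) : (x-y).c0 = x.c0 - y.c0 := by
  rw [sub_eq_add_neg, sub_eq_add_neg]; rfl
@[simp] lemma sub_c1 (x y : B) : (x-y).c1 = x.c1 - y.c1 := by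
  rw [sub_eq_add_neg, sub_eq_add_neg]; rfl
@[simp] lemma sub_c2 (x y : B) : (x-y).c2 = x.c2 - y.c2 := by
  rw [sub_eq_add_neg, sub_eq_add_neg]; rfl
@[simp] lemma sub_c3 (x y : B) : (x-y).c3 = x.c3 - y.c3 := by
  rw [sub_eq_add_neg, sub_eq_add_neg]; rfl
@[simp] lemma sub_c12 (x y : B) : (x-y).c12 = x.c12 - y.c12 := by
  rw [sub_eq_add_neg, sub_eq_add_neg]; rfl
@[simp] lemma sub_c13 (x y : B) : (x-y).c13 = x.c13 - y.c13 := by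
  rw [sub_eq_add_neg, sub_eq_add_neg]; rfl
@[simp] lemma sub_c23 (x y : B) : (x-y).c23 = x.c23 - y.c23 := by
  rw [sub_eq_add_neg, sub_eq_add_neg]; rfl

instance : Algebra ℚ B := Algebra.ofModule
  (fun q x y => by ext : 1 <;> simp [smul_sub, mul_smul_comm, smul_mul_assoc])
  (fun q x y => by ext : 1 <;> simp [smul_sub, mul_smul_comm, smul_mul_assoc])


/-- Box submodule from componentwise submodules. -/
def box (S0 S1 S2 S3 S12 S13 S23 : Submodule ℚ P) : Submodule ℚ B where
  carrier := {x | x.c0 ∈ S0 ∧ x.c1 ∈ S1 ∧ x.c2 ∈ S2 ∧ x.c3 ∈ S3 ∧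
    x.c12 ∈ S12 ∧ x.c13 ∈ S13 ∧ x.c23 ∈ S23}
  add_mem' := by
    rintro a b ⟨h0,h1,h2,h3,h4,h5,h6⟩ ⟨g0,g1,g2,g3,g4,g5,g6⟩
    exact ⟨add_mem h0 g0, add_mem h1 g1, add_mem h2 g2, add_mem h3 g3,
      add_mem h4 g4, add_mem h5 g5, add_mem h6 g6⟩
  zero_mem' := by
    exact ⟨zero_mem _, zero_mem _, zero_mem _, zero_mem _, zero_mem _, zero_mem _, zero_mem _⟩
  smul_mem' := by
    rintro q a ⟨h0,h1,h2,h3,h4,h5,h6⟩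
    exact ⟨Submodule.smul_mem _ q h0, Submodule.smul_mem _ q h1, Submodule.smul_mem _ q h2,
      Submodule.smul_mem _ q h3, Submodule.smul_mem _ q h4, Submodule.smul_mem _ q h5,
      Submodule.smul_mem _ q h6⟩

lemma mem_box {S0 S1 S2 S3 S12 S13 S23 : Submodule ℚ P} {x : B} :
    x ∈ box S0 S1 S2 S3 S12 S13 S23 ↔ (x.c0 ∈ S0 ∧ x.c1 ∈ S1 ∧ x.c2 ∈ S2 ∧ x.c3 ∈ S3 ∧
      x.c12 ∈ S12 ∧ x.c13 ∈ S13 ∧ x.c23 ∈ S23) := Iff.rfl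

/-- The grading of `B`. -/
def gr (k : ℕ) : Submodule ℚ B :=
  box (Wc 0 k) (Wc 33 k) (Wc 35 k) (Wc 37 k) (Wc 68 k) (Wc 70 k) (Wc 72 k)

lemma one_mem_gr : (1 : B) ∈ gr 0 := by
  refine ⟨?_, ?_, ?_, ?_, ?_, ?_, ?_⟩ <;>
    simp only [Wc, if_pos (le_refl 0), if_neg (by omega : ¬ (33:ℕ) ≤ 0),
      if_neg (by omega : ¬ (35:ℕ) ≤ 0), if_neg (by omega : ¬ (37:ℕ) ≤ 0),
      if_neg (by omega : ¬ (68:ℕ) ≤ 0), if_neg (by omega : ¬ (70:ℕ) ≤ 0),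
      if_neg (by omega : ¬ (72:ℕ) ≤ 0)]
  · exact MvPolynomial.isWeightedHomogeneous_one ℚ wt
  all_goals simp [B.one_c1, B.one_c2, B.one_c3, B.one_c12, B.one_c13, B.one_c23]

lemma mul_mem_gr {i j : ℕ} {x y : B} (hx : x ∈ gr i) (hy : y ∈ gr j) : x * y ∈ gr (i + j) := by
  obtain ⟨h0,h1,h2,h3,h4,h5,h6⟩ := hx
  obtain ⟨g0,g1,g2,g3,g4,g5,g6⟩ := hy
  refine ⟨?_, ?_, ?_, ?_, ?_, ?_, ?_⟩
  · exact Wc_mul (s := 0) (t := 0) h0 g0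
  · exact add_mem (Wc_mul (s := 0) (t := 33) h0 g1) (Wc_mul (s := 33) (t := 0) h1 g0)
  · exact add_mem (Wc_mul (s := 0) (t := 35) h0 g2) (Wc_mul (s := 35) (t := 0) h2 g0)
  · exact add_mem (Wc_mul (s := 0) (t := 37) h0 g3) (Wc_mul (s := 37) (t := 0) h3 g0)
  · exact add_mem (add_mem (Wc_mul (s := 0) (t := 68) h0 g4) (Wc_mul (s := 68) (t := 0) h4 g0))
      (sub_mem (Wc_mul (s := 33) (t := 35) h1 g2) (Wc_mul (s := 35) (t := 33) h2 g1))
  · exact add_mem (add_mem (Wc_mul (s := 0) (t := 70) h0 g5) (Wc_mul (s := 70) (t := 0) h5 g0))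
      (sub_mem (Wc_mul (s := 33) (t := 37) h1 g3) (Wc_mul (s := 37) (t := 33) h3 g1))
  · exact add_mem (add_mem (Wc_mul (s := 0) (t := 72) h0 g6) (Wc_mul (s := 72) (t := 0) h6 g0))
      (sub_mem (Wc_mul (s := 35) (t := 37) h2 g3) (Wc_mul (s := 37) (t := 35) h3 g2))

/-- components of odd degree elements vanish on the even part. -/
lemma odd_vanish {i : ℕ} {x : B} (hx : x ∈ gr i) (hi : i % 2 = 1) :
    x.c0 = 0 ∧ x.c12 = 0 ∧ x.c13 = 0 ∧ x.c23 = 0 := by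
  obtain ⟨h0,h1,h2,h3,h4,h5,h6⟩ := hx
  exact ⟨Wc_parity_eq_zero (by omega) h0, Wc_parity_eq_zero (by omega) h4,
    Wc_parity_eq_zero (by omega) h5, Wc_parity_eq_zero (by omega) h6⟩

lemma even_vanish {i : ℕ} {x : B} (hx : x ∈ gr i) (hi : i % 2 = 0) :
    x.c1 = 0 ∧ x.c2 = 0 ∧ x.c3 = 0 := by
  obtain ⟨h0,h1,h2,h3,h4,h5,h6⟩ := hx
  exact ⟨Wc_parity_eq_zero (by omega) h1, Wc_parity_eq_zero (by omega) h2,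
    Wc_parity_eq_zero (by omega) h3⟩

lemma gcomm_gr {i j : ℕ} {x y : B} (hx : x ∈ gr i) (hy : y ∈ gr j) :
    x * y = ((-1 : ℚ) ^ (i * j)) • (y * x) := by
  rcases Nat.even_or_odd i with hi | hi <;> rcases Nat.even_or_odd j with hj | hj
  · have hs : ((-1 : ℚ) ^ (i * j)) = 1 := (hi.mul_right j).neg_one_pow
    rw [hs, one_smul]
    obtain ⟨e1, e2, e3⟩ := even_vanish hx (Nat.even_iff.1 hi)
    obtain ⟨f1, f2, f3⟩ := even_vanish hy (Nat.even_iff.1 hj)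
    ext : 1 <;> simp [e1, e2, e3, f1, f2, f3] <;> ring
  · have hs : ((-1 : ℚ) ^ (i * j)) = 1 := (hi.mul_right j).neg_one_pow
    rw [hs, one_smul]
    obtain ⟨e1, e2, e3⟩ := even_vanish hx (Nat.even_iff.1 hi)
    obtain ⟨f0, f12, f13, f23⟩ := odd_vanish hy (Nat.odd_iff.1 hj)
    ext : 1 <;> simp [e1, e2, e3, f0, f12, f13, f23] <;> ring
  · have hs : ((-1 : ℚ) ^ (i * j)) = 1 := (hj.mul_left i).neg_one_pow
    rw [hs, one_smul]
    obtain ⟨e0, e12, e13, e23⟩ := odd_vanish hx (Nat.odd_iff.1 hi)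
    obtain ⟨f1, f2, f3⟩ := even_vanish hy (Nat.even_iff.1 hj)
    ext : 1 <;> simp [e0, e12, e13, e23, f1, f2, f3] <;> ring
  · have hs : ((-1 : ℚ) ^ (i * j)) = -1 := (hi.mul hj).neg_one_pow
    rw [hs, neg_smul, one_smul]
    obtain ⟨e0, e12, e13, e23⟩ := odd_vanish hx (Nat.odd_iff.1 hi)
    obtain ⟨f0, f12, f13, f23⟩ := odd_vanish hy (Nat.odd_iff.1 hj)
    ext : 1 <;> simp [e0, e12, e13, e23, f0, f12, f13, f23] <;> ring

end B

namespace B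

lemma W_internal : DirectSum.IsInternal W :=
  letI := MvPolynomial.weightedDecomposition ℚ wt
  DirectSum.Decomposition.isInternal W

lemma zero_mem_Wc (s k : ℕ) : (0 : P) ∈ Wc s k := zero_mem _

lemma mem_Wc_self {n : ℕ} {p : P} (hp : p ∈ W n) (s : ℕ) : p ∈ Wc s (n + s) := by
  unfold Wc
  rw [if_pos (by omega : s ≤ n + s)]
  simpa [Nat.add_sub_cancel] using hp

/-- generic coordinate lemma for the spanning property. -/
lemma coord_mem_iSup (s : ℕ) (f : P → B) (h0 : f 0 = 0)
    (hadd : ∀ p q, f (p + q) = f p + f q)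
    (hmem : ∀ n p, p ∈ W n → f p ∈ gr (n + s)) (p : P) : f p ∈ ⨆ k, gr k := by
  have hp : p ∈ ⨆ n, W n := by
    rw [W_internal.submodule_iSup_eq_top]; trivial
  refine Submodule.iSup_induction (motive := fun q => f q ∈ ⨆ k, gr k) W hp ?_ ?_ ?_
  · intro n q hq
    exact Submodule.mem_iSup_of_mem (n + s) (hmem n q hq)
  · show f 0 ∈ ⨆ k, gr k
    rw [h0]; exact zero_mem _
  · intro a b ha hb
    show f (a + b) ∈ ⨆ k, gr k
    rw [hadd]; exact add_mem ha hb

def p0 (p : P) : B := ⟨p,0,0,0,0,0,0⟩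
def p1 (p : P) : B := ⟨0,p,0,0,0,0,0⟩
def p2 (p : P) : B := ⟨0,0,p,0,0,0,0⟩
def p3 (p : P) : B := ⟨0,0,0,p,0,0,0⟩
def p12 (p : P) : B := ⟨0,0,0,0,p,0,0⟩
def p13 (p : P) : B := ⟨0,0,0,0,0,p,0⟩
def p23 (p : P) : B := ⟨0,0,0,0,0,0,p⟩

lemma p0_mem {n : ℕ} {p : P} (hp : p ∈ W n) : p0 p ∈ gr (n + 0) :=
  ⟨mem_Wc_self hp 0, zero_mem _, zero_mem _, zero_mem _, zero_mem _, zero_mem _, zero_mem _⟩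
lemma p1_mem {n : ℕ} {p : P} (hp : p ∈ W n) : p1 p ∈ gr (n + 33) :=
  ⟨zero_mem _, mem_Wc_self hp 33, zero_mem _, zero_mem _, zero_mem _, zero_mem _, zero_mem _⟩
lemma p2_mem {n : ℕ} {p : P} (hp : p ∈ W n) : p2 p ∈ gr (n + 35) :=
  ⟨zero_mem _, zero_mem _, mem_Wc_self hp 35, zero_mem _, zero_mem _, zero_mem _, zero_mem _⟩
lemma p3_mem {n : ℕ} {p : P} (hp : p ∈ W n) : p3 p ∈ gr (n + 37) :=
  ⟨zero_mem _, zero_mem _, zero_mem _, mem_Wc_self hp 37, zero_mem _, zero_mem _, zero_mem _⟩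
lemma p12_mem {n : ℕ} {p : P} (hp : p ∈ W n) : p12 p ∈ gr (n + 68) :=
  ⟨zero_mem _, zero_mem _, zero_mem _, zero_mem _, mem_Wc_self hp 68, zero_mem _, zero_mem _⟩
lemma p13_mem {n : ℕ} {p : P} (hp : p ∈ W n) : p13 p ∈ gr (n + 70) :=
  ⟨zero_mem _, zero_mem _, zero_mem _, zero_mem _, zero_mem _, mem_Wc_self hp 70, zero_mem _⟩
lemma p23_mem {n : ℕ} {p : P} (hp : p ∈ W n) : p23 p ∈ gr (n + 72) :=
  ⟨zero_mem _, zero_mem _, zero_mem _, zero_mem _, zero_mem _, zero_mem _, mem_Wc_self hp 72⟩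

lemma gr_iSup_eq_top : (⨆ k, gr k) = ⊤ := by
  rw [eq_top_iff]
  intro x _
  have hx : x = p0 x.c0 + p1 x.c1 + p2 x.c2 + p3 x.c3 + p12 x.c12 + p13 x.c13 + p23 x.c23 := by
    ext : 1 <;> simp [p0, p1, p2, p3, p12, p13, p23]
  rw [hx]
  refine add_mem (add_mem (add_mem (add_mem (add_mem (add_mem ?_ ?_) ?_) ?_) ?_) ?_) ?_
  · exact coord_mem_iSup 0 p0 (by ext : 1 <;> simp [p0]) (fun p q => by ext : 1 <;> simp [p0])
      (fun n p hp => p0_mem hp) _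
  · exact coord_mem_iSup 33 p1 (by ext : 1 <;> simp [p1]) (fun p q => by ext : 1 <;> simp [p1])
      (fun n p hp => p1_mem hp) _
  · exact coord_mem_iSup 35 p2 (by ext : 1 <;> simp [p2]) (fun p q => by ext : 1 <;> simp [p2])
      (fun n p hp => p2_mem hp) _
  · exact coord_mem_iSup 37 p3 (by ext : 1 <;> simp [p3]) (fun p q => by ext : 1 <;> simp [p3])
      (fun n p hp => p3_mem hp) _
  · exact coord_mem_iSup 68 p12 (by ext : 1 <;> simp [p12]) (fun p q => by ext : 1 <;> simp [p12])
      (fun n p hp => p12_mem hp) _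
  · exact coord_mem_iSup 70 p13 (by ext : 1 <;> simp [p13]) (fun p q => by ext : 1 <;> simp [p13])
      (fun n p hp => p13_mem hp) _
  · exact coord_mem_iSup 72 p23 (by ext : 1 <;> simp [p23]) (fun p q => by ext : 1 <;> simp [p23])
      (fun n p hp => p23_mem hp) _

/-- The supremum of the shifted pieces over all degrees other than `k`. -/
def SWc (s k : ℕ) : Submodule ℚ P := ⨆ (j) (_ : j ≠ k), Wc s j

lemma Wc_disjoint (s k : ℕ) : Disjoint (Wc s k) (SWc s k) := by
  by_cases hk : s ≤ k
  · have h1 : SWc s k ≤ ⨆ (m) (_ : m ≠ k - s), W m := by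
      refine iSup₂_le fun j hj => ?_
      by_cases hjs : s ≤ j
      · have : Wc s j = W (j - s) := if_pos hjs
        rw [this]
        exact le_iSup₂_of_le (j - s) (by omega) le_rfl
      · have : Wc s j = ⊥ := if_neg hjs
        rw [this]; exact bot_le
    have h2 : Wc s k = W (k - s) := if_pos hk
    rw [h2]
    exact (W_internal.submodule_iSupIndep (k - s)).mono_right h1
  · have : Wc s k = ⊥ := if_neg hk
    rw [this]; exact disjoint_bot_left

lemma gr_iSupIndep : iSupIndep gr := by
  intro k
  rw [Submodule.disjoint_def]
  intro x hx hx2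
  have hbig : (⨆ (j) (_ : j ≠ k), gr j) ≤
      box (SWc 0 k) (SWc 33 k) (SWc 35 k) (SWc 37 k) (SWc 68 k) (SWc 70 k) (SWc 72 k) := by
    refine iSup₂_le fun j hj => ?_
    rintro y ⟨h0,h1,h2,h3,h4,h5,h6⟩
    exact ⟨Submodule.mem_iSup_of_mem j (Submodule.mem_iSup_of_mem hj h0),
      Submodule.mem_iSup_of_mem j (Submodule.mem_iSup_of_mem hj h1),
      Submodule.mem_iSup_of_mem j (Submodule.mem_iSup_of_mem hj h2),
      Submodule.mem_iSup_of_mem j (Submodule.mem_iSup_of_mem hj h3),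
      Submodule.mem_iSup_of_mem j (Submodule.mem_iSup_of_mem hj h4),
      Submodule.mem_iSup_of_mem j (Submodule.mem_iSup_of_mem hj h5),
      Submodule.mem_iSup_of_mem j (Submodule.mem_iSup_of_mem hj h6)⟩
  obtain ⟨g0,g1,g2,g3,g4,g5,g6⟩ := hbig hx2
  obtain ⟨h0,h1,h2,h3,h4,h5,h6⟩ := hx
  ext : 1
  · exact (Wc_disjoint 0 k).le_bot ⟨h0, g0⟩
  · exact (Wc_disjoint 33 k).le_bot ⟨h1, g1⟩
  · exact (Wc_disjoint 35 k).le_bot ⟨h2, g2⟩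
  · exact (Wc_disjoint 37 k).le_bot ⟨h3, g3⟩
  · exact (Wc_disjoint 68 k).le_bot ⟨h4, g4⟩
  · exact (Wc_disjoint 70 k).le_bot ⟨h5, g5⟩
  · exact (Wc_disjoint 72 k).le_bot ⟨h6, g6⟩

lemma gr_internal : DirectSum.IsInternal gr :=
  DirectSum.isInternal_submodule_of_iSupIndep_of_iSup_eq_top gr_iSupIndep gr_iSup_eq_top

end B

/-- The concrete target graded-commutative algebra. -/
def BB : GradedCommAlg where
  carrier := B
  grading := B.gr
  internal := B.gr_internal
  one_mem := B.one_mem_gr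
  mul_mem := B.mul_mem_gr
  gcomm := B.gcomm_gr

namespace B

open MvPolynomial

lemma p0_mul_p0 (p q : P) : p0 p * p0 q = p0 (p * q) := by
  ext : 1 <;> simp [p0]

lemma p0_pow (p : P) (n : ℕ) : (p0 p) ^ n = p0 (p ^ n) := by
  induction n with
  | zero => ext : 1 <;> simp [p0]
  | succ n ih => rw [pow_succ, pow_succ, ih, p0_mul_p0]

lemma X0_mem : (X 0 : P) ∈ W 8 := by
  rw [MvPolynomial.mem_weightedHomogeneousSubmodule]
  simpa [wt] using MvPolynomial.isWeightedHomogeneous_X ℚ wt 0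

lemma X1_mem : (X 1 : P) ∈ W 10 := by
  rw [MvPolynomial.mem_weightedHomogeneousSubmodule]
  simpa [wt] using MvPolynomial.isWeightedHomogeneous_X ℚ wt 1

lemma one_mem_W : (1 : P) ∈ W 0 := MvPolynomial.isWeightedHomogeneous_one ℚ wt

end B

open MvPolynomial

def U : B := B.p0 (X 0)
def V : B := B.p0 (X 1)
def E1 : B := B.p1 1
def E2 : B := B.p2 1
def E3 : B := B.p3 1

lemma U_mem : U ∈ B.gr 8 := by simpa [U] using B.p0_mem B.X0_mem
lemma V_mem : V ∈ B.gr 10 := by simpa [V] using B.p0_mem B.X1_mem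
lemma E1_mem : E1 ∈ B.gr 33 := by simpa [E1] using B.p1_mem B.one_mem_W
lemma E2_mem : E2 ∈ B.gr 35 := by simpa [E2] using B.p2_mem B.one_mem_W
lemma E3_mem : E3 ∈ B.gr 37 := by simpa [E3] using B.p3_mem B.one_mem_W

def Γb : B := ⟨0, 0, 0, 0, (X 1)^2, -(X 0 * X 1), (X 0)^2⟩
def Vt : B := ⟨(X 1)^12, 0, 0, 0, 0, 0, 0⟩
def Zb : B := ⟨0, 0, 0, 0, -((5:ℚ) • ((X 0)^14 * (X 1)^2)), (5:ℚ) • ((X 0)^15 * (X 1)), (X 0)^16⟩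

lemma prod_gamma : U^2 * (E2 * E3) - U * V * (E1 * E3) + V^2 * (E1 * E2) = Γb := by
  rw [show (2:ℕ) = 1 + 1 from rfl, pow_add, pow_one, pow_add, pow_one]
  ext : 1 <;> simp [U, V, E1, E2, E3, B.p0, B.p1, B.p2, B.p3, Γb] <;> ring

lemma prod_Z : U^16 * (E2 * E3) + (5:ℚ) • (U^15 * V * (E1 * E3)) -
    (5:ℚ) • (U^14 * V^2 * (E1 * E2)) = Zb := by
  rw [U, V, B.p0_pow, B.p0_pow, B.p0_pow, B.p0_pow]
  ext : 1 <;> simp [E1, E2, E3, B.p0, B.p1, B.p2, B.p3, Zb, smul_sub] <;> ring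

/-- The "ideal" generated by `Γb` and `Vt` (as a `ℚ`-submodule). -/
def T : Submodule ℚ B where
  carrier := {z | ∃ r s : B, z = r * Γb + s * Vt}
  add_mem' := by
    rintro a b ⟨r, s, rfl⟩ ⟨r', s', rfl⟩
    exact ⟨r + r', s + s', by rw [add_mul, add_mul]; abel⟩
  zero_mem' := ⟨0, 0, by simp⟩
  smul_mem' := by
    rintro q a ⟨r, s, rfl⟩
    exact ⟨q • r, q • s, by rw [smul_add, smul_mul_assoc, smul_mul_assoc]⟩

lemma mem_T {z : B} : z ∈ T ↔ ∃ r s : B, z = r * Γb + s * Vt := Iff.rfl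

lemma V_pow : V ^ 12 = Vt := by rw [V, B.p0_pow]; rfl

lemma key (r s : B) : Zb ≠ r * Γb + s * Vt := by
  intro h
  have e23 := congrArg B.c23 h
  have e12 := congrArg B.c12 h
  simp only [Zb, Γb, Vt, B.mul_c23, B.mul_c12, B.add_c23, B.add_c12, mul_zero, zero_mul,
    add_zero, zero_add, sub_zero, zero_sub, mul_one, sub_self, neg_zero] at e23 e12
  rw [MvPolynomial.smul_eq_C_mul] at e12
  have key2 : (MvPolynomial.C (6:ℚ)) * ((X 0)^16 * (X 1)^2) =
      (s.c23 * (X 1)^2 - s.c12 * (X 0)^2) * (X 1)^12 := by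
    have hC : (MvPolynomial.C (6:ℚ) : P) = MvPolynomial.C (1:ℚ) + MvPolynomial.C (5:ℚ) := by
      rw [← MvPolynomial.C_add]; norm_num
    rw [hC, MvPolynomial.C_1]
    linear_combination (X 1)^2 * e23 - (X 0)^2 * e12
  have hco := congrArg (MvPolynomial.coeff (Finsupp.single 0 16 + Finsupp.single 1 2)) key2
  rw [MvPolynomial.coeff_C_mul, MvPolynomial.X_pow_eq_monomial, MvPolynomial.X_pow_eq_monomial,
    MvPolynomial.monomial_mul, MvPolynomial.coeff_monomial, if_pos rfl] at hco
  rw [show ((X 1 : P))^12 = MvPolynomial.monomial (Finsupp.single 1 12) (1:ℚ) from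
    MvPolynomial.X_pow_eq_monomial .., MvPolynomial.coeff_mul_monomial'] at hco
  have hnotle : ¬ Finsupp.single (1 : Fin 2) 12 ≤ Finsupp.single (0 : Fin 2) 16 + Finsupp.single 1 2 := by
    rw [Finsupp.single_le_iff]
    simp [Finsupp.single_apply]
  rw [if_neg hnotle] at hco
  norm_num at hco

end NotInIdealAux


/-- in `M₍₂₎ = Λ(x1,x2,y1,y2,y3)`, the element
`Z = x1¹⁶y2y3 + 5x1¹⁵x2y1y3 − 5x1¹⁴x2²y1y2` does not lie in the ideal generated by `γ`
and `x2¹²`. -/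
theorem element_not_in_gamma_x2_ideal
    (M2 : ConnectedDGA) (x1 x2 y1 y2 y3 : M2.carrier)
    (hAL : FreeAL M2 x1 x2 y1 y2 y3) :
    x1 ^ 16 * (y2 * y3) + (5 : ℚ) • (x1 ^ 15 * x2 * (y1 * y3)) -
        (5 : ℚ) • (x1 ^ 14 * x2 ^ 2 * (y1 * y2)) ∉
      M2.mulIdeal
        {x1 ^ 2 * (y2 * y3) - x1 * x2 * (y1 * y3) + x2 ^ 2 * (y1 * y2), x2 ^ 12} := by
  classical
  intro hmem
  obtain ⟨hx1, hx2, hy1, hy2, hy3, hd1, hd2, hd3, hd4, hd5, huniv⟩ := hAL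
  obtain ⟨g, ⟨hgdeg, hg1, hg2, hg3, hg4, hg5⟩, -⟩ :=
    huniv NotInIdealAux.BB NotInIdealAux.U NotInIdealAux.V NotInIdealAux.E1 NotInIdealAux.E2
      NotInIdealAux.E3 NotInIdealAux.U_mem NotInIdealAux.V_mem NotInIdealAux.E1_mem
      NotInIdealAux.E2_mem NotInIdealAux.E3_mem
  have hZmap : g.toLinearMap (x1 ^ 16 * (y2 * y3) + (5 : ℚ) • (x1 ^ 15 * x2 * (y1 * y3)) -
      (5 : ℚ) • (x1 ^ 14 * x2 ^ 2 * (y1 * y2))) ∈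
      Submodule.map g.toLinearMap (M2.mulIdeal
        {x1 ^ 2 * (y2 * y3) - x1 * x2 * (y1 * y3) + x2 ^ 2 * (y1 * y2), x2 ^ 12}) :=
    ⟨_, hmem, rfl⟩
  rw [ConnectedDGA.mulIdeal, Submodule.map_span] at hZmap
  have hle : Submodule.span ℚ (g.toLinearMap ''
      {x | ∃ r : M2.carrier, ∃ s ∈ ({x1 ^ 2 * (y2 * y3) - x1 * x2 * (y1 * y3) +
        x2 ^ 2 * (y1 * y2), x2 ^ 12} : Set M2.carrier), x = r * s}) ≤ NotInIdealAux.T := by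
    refine Submodule.span_le.2 ?_
    rintro _ ⟨w, ⟨r, sel, hsel, rfl⟩, rfl⟩
    simp only [Set.mem_insert_iff, Set.mem_singleton_iff] at hsel
    rcases hsel with rfl | rfl
    · refine NotInIdealAux.mem_T.2 ⟨g r, 0, ?_⟩
      simp only [AlgHom.toLinearMap_apply, map_mul, map_add, map_sub, map_pow]
      rw [hg1, hg2, hg3, hg4, hg5]
      have key : ∀ t : NotInIdealAux.B, t * (NotInIdealAux.U ^ 2 * (NotInIdealAux.E2 * NotInIdealAux.E3) -
          NotInIdealAux.U * NotInIdealAux.V * (NotInIdealAux.E1 * NotInIdealAux.E3) +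
          NotInIdealAux.V ^ 2 * (NotInIdealAux.E1 * NotInIdealAux.E2)) =
          t * NotInIdealAux.Γb + 0 * NotInIdealAux.Vt := fun t => by
        rw [NotInIdealAux.prod_gamma, zero_mul, add_zero]
      exact key (g r)
    · refine NotInIdealAux.mem_T.2 ⟨0, g r, ?_⟩
      simp only [AlgHom.toLinearMap_apply, map_mul, map_pow]
      rw [hg2]
      have key : ∀ t : NotInIdealAux.B, t * NotInIdealAux.V ^ 12 =
          0 * NotInIdealAux.Γb + t * NotInIdealAux.Vt := fun t => by
        rw [NotInIdealAux.V_pow, zero_mul, zero_add]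
      exact key (g r)
  have hZb := hle hZmap
  simp only [AlgHom.toLinearMap_apply] at hZb
  simp only [map_sub, map_add, map_smul, map_mul, map_pow, hg1, hg2, hg3, hg4, hg5] at hZb
  have hZb : NotInIdealAux.Zb ∈ NotInIdealAux.T := by rw [← NotInIdealAux.prod_Z]; exact hZb
  obtain ⟨r, s, h⟩ := NotInIdealAux.mem_T.1 hZb
  exact NotInIdealAux.key r s h
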